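/- The assume-guarantee rule ASym is sound: for LPTSes L1, L2, A, P with α_A ⊆ α_2, if L1 ∥ A ≼ P and L2 ≼ A, then L1 ∥ L2 ≼ P. -/

import Mathlib

open Classical

structure FDist (S : Type) [Fintype S] where
  pmf : S → ℝ
  nonneg : ∀ s, 0 ≤ pmf s
  sum_one : ∑ s, pmf s = 1

namespace FDist

variable {S S1 S2 : Type} [Fintype S] [Fintype S1] [Fintype S2]

noncomputable def prob (μ : FDist S) (T : Set S) : ℝ :=
  ∑ s, if s ∈ T then μ.pmf s else 0

def supp (μ : FDist S) : Set S := {s | 0 < μ.pmf s}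

noncomputable def dirac (s : S) : FDist S where
  pmf t := if t = s then 1 else 0
  nonneg t := by (try dsimp only); split <;> norm_num
  sum_one := by simp

noncomputable def prod (μ1 : FDist S1) (μ2 : FDist S2) : FDist (S1 × S2) where
  pmf p := μ1.pmf p.1 * μ2.pmf p.2
  nonneg p := mul_nonneg (μ1.nonneg _) (μ2.nonneg _)
  sum_one := by
    rw [Fintype.sum_prod_type]
    simp_rw [← Finset.mul_sum, μ2.sum_one, mul_one]
    exact μ1.sum_one

end FDist

/-- Image of a set under a relation: `R(T) = {s2 | ∃ s1 ∈ T, (s1,s2) ∈ R}`. -/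
def relImage {S1 S2 : Type} (R : Set (S1 × S2)) (T : Set S1) : Set S2 :=
  {s2 | ∃ s1 ∈ T, (s1, s2) ∈ R}

/-- The lifting `μ1 ⊑_R μ2` of a relation on states to distributions,
via the Hall-type subset condition. -/
def liftRel {S1 S2 : Type} [Fintype S1] [Fintype S2]
    (R : Set (S1 × S2)) (μ1 : FDist S1) (μ2 : FDist S2) : Prop :=
  ∀ T ⊆ μ1.supp, μ1.prob T ≤ μ2.prob (relImage R T)

/-- A (finite, finitely-branching) labeled probabilistic transition system. -/
structure LPTS (S : Type) (Act : Type) [Fintype S] where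
  start : S
  alpha : Set Act
  trans : S → Act → Set (FDist S)
  trans_mem : ∀ s a μ, μ ∈ trans s a → a ∈ alpha
  finite_trans : ∀ s a, (trans s a).Finite

/-- `R` is a strong simulation between `L1` and `L2`. -/
def StrongSim {S1 S2 Act : Type} [Fintype S1] [Fintype S2]
    (L1 : LPTS S1 Act) (L2 : LPTS S2 Act) (R : Set (S1 × S2)) : Prop :=
  ∀ s1 s2, (s1, s2) ∈ R → ∀ a μ1, μ1 ∈ L1.trans s1 a →
    ∃ μ2 ∈ L2.trans s2 a, liftRel R μ1 μ2

/-- `L2` strongly simulates `L1` (written `L1 ≼ L2`). -/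
def Sim {S1 S2 Act : Type} [Fintype S1] [Fintype S2]
    (L1 : LPTS S1 Act) (L2 : LPTS S2 Act) : Prop :=
  ∃ R, StrongSim L1 L2 R ∧ (L1.start, L2.start) ∈ R

/-- Parallel composition of LPTSes (Segala–Lynch). -/
noncomputable def par {S1 S2 Act : Type} [Fintype S1] [Fintype S2]
    (L1 : LPTS S1 Act) (L2 : LPTS S2 Act) : LPTS (S1 × S2) Act where
  start := (L1.start, L2.start)
  alpha := L1.alpha ∪ L2.alpha
  trans p a := {μ |
    (∃ μ1 ∈ L1.trans p.1 a, ∃ μ2 ∈ L2.trans p.2 a, μ = μ1.prod μ2) ∨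
    (∃ μ1 ∈ L1.trans p.1 a, a ∉ L2.alpha ∧ μ = μ1.prod (FDist.dirac p.2)) ∨
    (a ∉ L1.alpha ∧ ∃ μ2 ∈ L2.trans p.2 a, μ = (FDist.dirac p.1).prod μ2)}
  trans_mem := by
    rintro p a μ (⟨μ1, h1, -⟩ | ⟨μ1, h1, -⟩ | ⟨-, μ2, h2, -⟩)
    · exact Or.inl (L1.trans_mem _ _ _ h1)
    · exact Or.inl (L1.trans_mem _ _ _ h1)
    · exact Or.inr (L2.trans_mem _ _ _ h2)
  finite_trans := by
    intro p a
    apply Set.Finite.subset (Set.Finite.union (Set.Finite.union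
      (Set.Finite.image (fun q : FDist S1 × FDist S2 => q.1.prod q.2)
        (Set.Finite.prod (L1.finite_trans p.1 a) (L2.finite_trans p.2 a)))
      (Set.Finite.image (fun μ1 => μ1.prod (FDist.dirac p.2)) (L1.finite_trans p.1 a)))
      (Set.Finite.image (fun μ2 => (FDist.dirac p.1).prod μ2) (L2.finite_trans p.2 a)))
    rintro μ (⟨μ1, h1, μ2, h2, rfl⟩ | ⟨μ1, h1, -, rfl⟩ | ⟨-, μ2, h2, rfl⟩)
    · exact Or.inl (Or.inl ⟨(μ1, μ2), Set.mk_mem_prod h1 h2, rfl⟩)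
    · exact Or.inl (Or.inr ⟨μ1, h1, rfl⟩)
    · exact Or.inr ⟨μ2, h2, rfl⟩

section Aux

variable {S S1 S2 : Type} [Fintype S] [Fintype S1] [Fintype S2]

lemma FDist.prob_nonneg (μ : FDist S) (T : Set S) : 0 ≤ μ.prob T := by
  apply Finset.sum_nonneg
  intro s _
  split <;> [exact μ.nonneg s; exact le_rfl]

lemma FDist.prob_mono (μ : FDist S) {T U : Set S} (h : T ⊆ U) : μ.prob T ≤ μ.prob U := by
  apply Finset.sum_le_sum
  intro s _
  by_cases hs : s ∈ T
  · simp [hs, h hs]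
  · simp only [hs, if_false]
    split <;> [exact μ.nonneg s; exact le_rfl]

lemma FDist.prob_inter_supp (μ : FDist S) (T : Set S) :
    μ.prob (T ∩ μ.supp) = μ.prob T := by
  apply Finset.sum_congr rfl
  intro s _
  by_cases hs : s ∈ T
  · by_cases hsupp : 0 < μ.pmf s
    · simp [hs, hsupp, FDist.supp, Set.mem_inter_iff]
    · have : μ.pmf s = 0 := le_antisymm (not_lt.mp hsupp) (μ.nonneg s)
      simp [this]
  · simp [hs]

lemma FDist.dirac_prob (s : S) (U : Set S) :
    (FDist.dirac s).prob U = if s ∈ U then 1 else 0 := by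
  unfold FDist.prob FDist.dirac
  simp only
  have : ∀ t, (if t ∈ U then (if t = s then (1:ℝ) else 0) else 0)
      = if t = s then (if s ∈ U then 1 else 0) else 0 := by
    intro t
    by_cases ht : t = s
    · subst ht; simp
    · simp [ht]
  rw [Finset.sum_congr rfl (fun t _ => this t), Finset.sum_ite_eq' Finset.univ s]
  simp

lemma FDist.dirac_supp (s : S) : (FDist.dirac s).supp = {s} := by
  ext t
  simp only [FDist.supp, FDist.dirac, Set.mem_setOf_eq, Set.mem_singleton_iff]
  by_cases ht : t = s <;> simp [ht]

lemma FDist.prod_prob (μ1 : FDist S1) (μ2 : FDist S2) (T : Set (S1 × S2)) :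
    (μ1.prod μ2).prob T = ∑ s, μ1.pmf s * μ2.prob {t | (s, t) ∈ T} := by
  unfold FDist.prob FDist.prod
  rw [Fintype.sum_prod_type]
  apply Finset.sum_congr rfl
  intro s _
  rw [Finset.mul_sum]
  apply Finset.sum_congr rfl
  intro t _
  simp only [Set.mem_setOf_eq]
  split <;> simp

/-- Composition of relations. -/
def relComp {S1 S2 S3 : Type} (R : Set (S1 × S2)) (R' : Set (S2 × S3)) : Set (S1 × S3) :=
  {p | ∃ b, (p.1, b) ∈ R ∧ (b, p.2) ∈ R'}

lemma liftRel_comp {S1 S2 S3 : Type} [Fintype S1] [Fintype S2] [Fintype S3]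
    {R : Set (S1 × S2)} {R' : Set (S2 × S3)} {μ : FDist S1} {ν : FDist S2} {ξ : FDist S3}
    (h1 : liftRel R μ ν) (h2 : liftRel R' ν ξ) : liftRel (relComp R R') μ ξ := by
  intro T hT
  have step1 : μ.prob T ≤ ν.prob (relImage R T) := h1 T hT
  have step2 : ν.prob (relImage R T) = ν.prob (relImage R T ∩ ν.supp) :=
    (ν.prob_inter_supp _).symm
  have step3 : ν.prob (relImage R T ∩ ν.supp) ≤ ξ.prob (relImage R' (relImage R T ∩ ν.supp)) :=
    h2 _ (Set.inter_subset_right)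
  have step4 : relImage R' (relImage R T ∩ ν.supp) ⊆ relImage (relComp R R') T := by
    rintro c ⟨b, ⟨⟨a, ha, hab⟩, -⟩, hbc⟩
    exact ⟨a, ha, b, hab, hbc⟩
  calc μ.prob T ≤ ν.prob (relImage R T ∩ ν.supp) := step2 ▸ step1
    _ ≤ ξ.prob (relImage R' (relImage R T ∩ ν.supp)) := step3
    _ ≤ ξ.prob (relImage (relComp R R') T) := ξ.prob_mono step4

lemma sim_trans {S1 S2 S3 Act : Type} [Fintype S1] [Fintype S2] [Fintype S3]
    {L1 : LPTS S1 Act} {L2 : LPTS S2 Act} {L3 : LPTS S3 Act}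
    (h1 : Sim L1 L2) (h2 : Sim L2 L3) : Sim L1 L3 := by
  obtain ⟨R, hR, hRs⟩ := h1
  obtain ⟨R', hR', hR's⟩ := h2
  refine ⟨relComp R R', ?_, ⟨L2.start, hRs, hR's⟩⟩
  rintro s1 s3 ⟨s2, h12, h23⟩ a μ1 hμ1
  obtain ⟨μ2, hμ2, hlift⟩ := hR s1 s2 h12 a μ1 hμ1
  obtain ⟨μ3, hμ3, hlift'⟩ := hR' s2 s3 h23 a μ2 hμ2
  exact ⟨μ3, hμ3, liftRel_comp hlift hlift'⟩

/-- The lifted relation for parallel composition on the right component. -/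
def parRel {S1 S2 SA : Type} (R : Set (S2 × SA)) : Set ((S1 × S2) × (S1 × SA)) :=
  {q | q.2.1 = q.1.1 ∧ (q.1.2, q.2.2) ∈ R}

lemma relImage_parRel {S1 S2 SA : Type} (R : Set (S2 × SA)) (T : Set (S1 × S2)) (u : S1) :
    {v | (u, v) ∈ relImage (parRel R) T} = relImage R {t | (u, t) ∈ T} := by
  ext v
  constructor
  · rintro ⟨⟨s, t⟩, hst, heq, hR⟩
    simp only at heq hR
    exact ⟨t, by rwa [← heq] at hst, hR⟩
  · rintro ⟨t, ht, hR⟩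
    exact ⟨(u, t), ht, rfl, hR⟩

lemma liftRel_prod_right {S1 S2 SA : Type} [Fintype S1] [Fintype S2] [Fintype SA]
    {R : Set (S2 × SA)} {μ1 : FDist S1} {μ2 : FDist S2} {ν : FDist SA}
    (h : liftRel R μ2 ν) :
    liftRel (parRel R) (μ1.prod μ2) (μ1.prod ν) := by
  intro T hT
  rw [FDist.prod_prob, FDist.prod_prob]
  apply Finset.sum_le_sum
  intro s _
  by_cases hs : 0 < μ1.pmf s
  · apply mul_le_mul_of_nonneg_left _ (μ1.nonneg s)
    have hslice : {t | (s, t) ∈ T} ⊆ μ2.supp := by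
      intro t ht
      have := hT ht
      have hpos : 0 < μ1.pmf s * μ2.pmf t := this
      exact (mul_pos_iff.mp hpos).elim (fun h => h.2) (fun h => absurd h.1 (not_lt.mpr (μ1.nonneg s)))
    calc μ2.prob {t | (s, t) ∈ T} ≤ ν.prob (relImage R {t | (s, t) ∈ T}) := h _ hslice
      _ = ν.prob {v | (s, v) ∈ relImage (parRel R) T} := by rw [relImage_parRel]
  · have : μ1.pmf s = 0 := le_antisymm (not_lt.mp hs) (μ1.nonneg s)
    simp [this]

lemma liftRel_dirac {S2 SA : Type} [Fintype S2] [Fintype SA]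
    {R : Set (S2 × SA)} {s2 : S2} {sa : SA} (h : (s2, sa) ∈ R) :
    liftRel R (FDist.dirac s2) (FDist.dirac sa) := by
  intro T hT
  rw [FDist.dirac_prob, FDist.dirac_prob]
  by_cases hs : s2 ∈ T
  · simp only [hs, if_true]
    have : sa ∈ relImage R T := ⟨s2, hs, h⟩
    simp [this]
  · simp only [hs, if_false]
    split <;> norm_num

lemma par_precong {S1 S2 SA Act : Type} [Fintype S1] [Fintype S2] [Fintype SA]
    (L1 : LPTS S1 Act) (L2 : LPTS S2 Act) (A : LPTS SA Act)
    (halpha : A.alpha ⊆ L2.alpha) (h : Sim L2 A) :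
    Sim (par L1 L2) (par L1 A) := by
  obtain ⟨R, hR, hRs⟩ := h
  refine ⟨parRel R, ?_, rfl, hRs⟩
  rintro ⟨s1, s2⟩ ⟨t1, ta⟩ ⟨heq, hRm⟩ a μ hμ
  simp only at heq hRm
  subst heq
  rcases hμ with ⟨μ1, hμ1, μ2, hμ2, rfl⟩ | ⟨μ1, hμ1, hna, rfl⟩ | ⟨hna, μ2, hμ2, rfl⟩
  · obtain ⟨ν, hν, hlift⟩ := hR s2 ta hRm a μ2 hμ2
    exact ⟨μ1.prod ν, Or.inl ⟨μ1, hμ1, ν, hν, rfl⟩, liftRel_prod_right hlift⟩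
  · refine ⟨μ1.prod (FDist.dirac ta), Or.inr (Or.inl ⟨μ1, hμ1, fun hc => hna (halpha hc), rfl⟩),
      liftRel_prod_right (liftRel_dirac hRm)⟩
  · obtain ⟨ν, hν, hlift⟩ := hR s2 ta hRm a μ2 hμ2
    exact ⟨(FDist.dirac t1).prod ν, Or.inr (Or.inr ⟨hna, ν, hν, rfl⟩),
      liftRel_prod_right hlift⟩

end Aux

/-- Soundness of the assume-guarantee rule ASym. -/
theorem asym_sound {S1 S2 SA SP Act : Type}
    [Fintype S1] [Fintype S2] [Fintype SA] [Fintype SP]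
    (L1 : LPTS S1 Act) (L2 : LPTS S2 Act) (A : LPTS SA Act) (P : LPTS SP Act)
    (halpha : A.alpha ⊆ L2.alpha)
    (h1 : Sim (par L1 A) P) (h2 : Sim L2 A) :
    Sim (par L1 L2) P :=
  sim_trans (par_precong L1 L2 A halpha h2) h1
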